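/- Let H, K, G, G' be complex Hilbert spaces, let A ∈ B(H,K), and let V_A ∈ B(H,K) be the unique operator with |A*|^{1/2} V_A = A and range V_A ⊆ closure(range A). Let C ∈ B(G,H) and D ∈ B(G',K), and set T₂₁ = A ∘ C and T₁₂* = A* ∘ D. Then the reduced solutions E of V_A Y = T₂₁ and F of |A|^{1/2}Y = T₁₂* exist, and F*∘E = D* ∘ A ∘ C. -/

import Mathlib

/-- `|T|^α = (T*T)^{α/2}` defined via the continuous functional calculus. -/
noncomputable def absPow {H K : Type*} [NormedAddCommGroup H] [InnerProductSpace ℂ H]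
    [NormedAddCommGroup K] [InnerProductSpace ℂ K] [CompleteSpace H] [CompleteSpace K]
    (T : H →L[ℂ] K) (α : ℝ) : H →L[ℂ] H :=
  CFC.rpow ((ContinuousLinearMap.adjoint T).comp T) (α / 2)

section Aux

open ContinuousLinearMap Polynomial
open scoped NNReal

variable {H K : Type*}
  [NormedAddCommGroup H] [InnerProductSpace ℂ H] [CompleteSpace H]
  [NormedAddCommGroup K] [InnerProductSpace ℂ K] [CompleteSpace K]

lemma pow_intertwine (A : H →L[ℂ] K) (T : H →L[ℂ] H) (S : K →L[ℂ] K)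
    (h : A.comp T = S.comp A) (n : ℕ) : A.comp (T ^ n) = (S ^ n).comp A := by
  induction n with
  | zero => simp [ContinuousLinearMap.one_def]
  | succ n ih =>
    rw [pow_succ, pow_succ, ContinuousLinearMap.mul_def, ContinuousLinearMap.mul_def,
      ← ContinuousLinearMap.comp_assoc, ih, ContinuousLinearMap.comp_assoc, h,
      ← ContinuousLinearMap.comp_assoc]

lemma aeval_intertwine (A : H →L[ℂ] K) (T : H →L[ℂ] H) (S : K →L[ℂ] K)
    (h : A.comp T = S.comp A) (q : ℝ[X]) :
    A.comp (aeval T q) = (aeval S q).comp A := by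
  induction q using Polynomial.induction_on' with
  | add p q hp hq =>
    simp only [map_add, ContinuousLinearMap.comp_add, ContinuousLinearMap.add_comp, hp, hq]
  | monomial n r =>
    have hp := pow_intertwine A T S h n
    ext x
    simp only [aeval_monomial, Algebra.algebraMap_eq_smul_one, smul_mul_assoc, one_mul,
      ContinuousLinearMap.comp_apply, ContinuousLinearMap.smul_apply]
    rw [A.map_smul_of_tower]
    congr 1
    simpa using congrArg (fun (f : H →L[ℂ] K) => f x) hp

lemma cfc_real_intertwine (A : H →L[ℂ] K) (f : ℝ → ℝ) (hf : Continuous f) :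
    A.comp (cfc f ((ContinuousLinearMap.adjoint A).comp A))
      = (cfc f (A.comp (ContinuousLinearMap.adjoint A))).comp A := by
  set T := (ContinuousLinearMap.adjoint A).comp A with hTdef
  set S := A.comp (ContinuousLinearMap.adjoint A) with hSdef
  have hcomm : A.comp T = S.comp A := by
    rw [hTdef, hSdef, ContinuousLinearMap.comp_assoc]
  have hT : IsSelfAdjoint T := by
    rw [IsSelfAdjoint, ContinuousLinearMap.star_eq_adjoint, hTdef, adjoint_comp, adjoint_adjoint]
  have hS : IsSelfAdjoint S := by
    rw [IsSelfAdjoint, ContinuousLinearMap.star_eq_adjoint, hSdef, adjoint_comp, adjoint_adjoint]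
  set s : Set ℝ := spectrum ℝ T ∪ spectrum ℝ S with hsdef
  have hcs : IsCompact s := (spectrum.isCompact T).union (spectrum.isCompact S)
  haveI : CompactSpace s := isCompact_iff_compactSpace.mp hcs
  have hTs : spectrum ℝ T ⊆ s := Set.subset_union_left
  have hSs : spectrum ℝ S ⊆ s := Set.subset_union_right
  have hΦ : Continuous fun g : C(s, ℝ) => A.comp (cfcHomSuperset hT hTs g) :=
    Continuous.clm_comp continuous_const (cfcHomSuperset_continuous hT hTs)
  have hΨ : Continuous fun g : C(s, ℝ) => (cfcHomSuperset hS hSs g).comp A :=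
    Continuous.clm_comp (cfcHomSuperset_continuous hS hSs) continuous_const
  have hpolyT : ∀ q : ℝ[X], cfcHomSuperset hT hTs (q.toContinuousMapOn s) = aeval T q := by
    intro q
    have h1 : ((cfcHomSuperset hT hTs).toAlgHom.comp (toContinuousMapOnAlgHom s) : ℝ[X] →ₐ[ℝ] _)
        = aeval T := by
      apply Polynomial.algHom_ext
      show cfcHomSuperset hT hTs (toContinuousMapOnAlgHom s X) = aeval T X
      rw [toContinuousMapOnAlgHom_apply, toContinuousMapOn_X_eq_restrict_id,
        cfcHomSuperset_id, aeval_X]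
    exact congrArg (fun φ : ℝ[X] →ₐ[ℝ] (H →L[ℂ] H) => φ q) h1
  have hpolyS : ∀ q : ℝ[X], cfcHomSuperset hS hSs (q.toContinuousMapOn s) = aeval S q := by
    intro q
    have h1 : ((cfcHomSuperset hS hSs).toAlgHom.comp (toContinuousMapOnAlgHom s) : ℝ[X] →ₐ[ℝ] _)
        = aeval S := by
      apply Polynomial.algHom_ext
      show cfcHomSuperset hS hSs (toContinuousMapOnAlgHom s X) = aeval S X
      rw [toContinuousMapOnAlgHom_apply, toContinuousMapOn_X_eq_restrict_id,
        cfcHomSuperset_id, aeval_X]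
    exact congrArg (fun φ : ℝ[X] →ₐ[ℝ] (K →L[ℂ] K) => φ q) h1
  have hdense : Dense (polynomialFunctions s : Set C(s, ℝ)) := by
    rw [dense_iff_closure_eq, ← Subalgebra.topologicalClosure_coe,
      polynomialFunctions.topologicalClosure s]
    rfl
  have heq : (fun g : C(s, ℝ) => A.comp (cfcHomSuperset hT hTs g))
      = fun g : C(s, ℝ) => (cfcHomSuperset hS hSs g).comp A := by
    refine Continuous.ext_on hdense hΦ hΨ ?_
    rintro g hg
    rw [polynomialFunctions_coe] at hg
    obtain ⟨q, rfl⟩ := hg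
    show A.comp (cfcHomSuperset hT hTs (q.toContinuousMapOn s))
      = (cfcHomSuperset hS hSs (q.toContinuousMapOn s)).comp A
    rw [hpolyT, hpolyS]
    exact aeval_intertwine A T S hcomm q
  have happ := congrFun heq ((ContinuousMap.mk f hf).restrict s)
  have hT' : cfcHomSuperset hT hTs ((ContinuousMap.mk f hf).restrict s) = cfc f T := by
    rw [cfc_apply f T hT hf.continuousOn, cfcHomSuperset_apply]
    exact congrArg (cfcHom hT) (ContinuousMap.ext fun x => rfl)
  have hS' : cfcHomSuperset hS hSs ((ContinuousMap.mk f hf).restrict s) = cfc f S := by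
    rw [cfc_apply f S hS hf.continuousOn, cfcHomSuperset_apply]
    exact congrArg (cfcHom hS) (ContinuousMap.ext fun x => rfl)
  rw [hT', hS'] at happ
  exact happ


lemma adjoint_comp_self_nonneg (A : H →L[ℂ] K) :
    (0 : H →L[ℂ] H) ≤ (ContinuousLinearMap.adjoint A).comp A := by
  rw [ContinuousLinearMap.nonneg_iff_isPositive]
  simpa [ContinuousLinearMap.one_def] using (ContinuousLinearMap.isPositive_one (E := K)).adjoint_conj A

lemma absPow_nonneg (A : H →L[ℂ] K) (α : ℝ) : (0 : H →L[ℂ] H) ≤ absPow A α := by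
  unfold absPow; exact CFC.rpow_nonneg

lemma absPow_half_comm (A : H →L[ℂ] K) :
    A.comp (absPow A (1/2)) = (absPow (ContinuousLinearMap.adjoint A) (1/2)).comp A := by
  have hT : (0 : H →L[ℂ] H) ≤ (ContinuousLinearMap.adjoint A).comp A :=
    adjoint_comp_self_nonneg A
  have hS : (0 : K →L[ℂ] K) ≤ A.comp (ContinuousLinearMap.adjoint A) := by
    simpa [adjoint_adjoint] using adjoint_comp_self_nonneg (ContinuousLinearMap.adjoint A)
  have hcont : Continuous (fun x : ℝ => ((Real.toNNReal x ^ ((1:ℝ)/2/2) : ℝ≥0) : ℝ)) :=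
    NNReal.continuous_coe.comp ((NNReal.continuous_rpow_const (by norm_num)).comp
      continuous_real_toNNReal)
  unfold absPow
  rw [adjoint_adjoint]
  unfold CFC.rpow
  rw [cfc_nnreal_eq_real _ _ hT, cfc_nnreal_eq_real _ _ hS]
  exact cfc_real_intertwine A _ hcont

lemma absPow_half_pow_four (A : H →L[ℂ] K) :
    absPow A (1/2) ^ (4:ℕ) = (ContinuousLinearMap.adjoint A).comp A := by
  have hT : (0 : H →L[ℂ] H) ≤ (ContinuousLinearMap.adjoint A).comp A :=
    adjoint_comp_self_nonneg A
  unfold absPow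
  simp only [CFC.rpow_eq_pow]
  rw [← CFC.rpow_natCast _ 4 CFC.rpow_nonneg,
    CFC.rpow_rpow_of_exponent_nonneg _ _ _ (by norm_num) (by norm_num) hT,
    show ((1:ℝ)/2/2) * ((4:ℕ):ℝ) = 1 by push_cast; norm_num,
    CFC.rpow_one _ hT]

end Aux


/-- `D` is the reduced solution of the system `A X = C`. -/
def IsReducedSolution {E H K : Type*}
    [NormedAddCommGroup E] [InnerProductSpace ℂ E] [CompleteSpace E]
    [NormedAddCommGroup H] [InnerProductSpace ℂ H] [CompleteSpace H]
    [NormedAddCommGroup K] [InnerProductSpace ℂ K] [CompleteSpace K]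
    (A : H →L[ℂ] K) (C : E →L[ℂ] K) (D : E →L[ℂ] H) : Prop :=
  A.comp D = C ∧ Set.range D ⊆ closure (Set.range (ContinuousLinearMap.adjoint A))

section Main

open ContinuousLinearMap

local notation "⟪" x ", " y "⟫" => @inner ℂ _ _ x y

/-- Proposition 5.5 (Hilbert-space case): if `T₂₁ = A C` and `T₁₂* = A* D`, then the reduced
solutions `E` of `V_A Y = T₂₁` and `F` of `|A|^{1/2} Y = T₁₂*` exist, and `F*E = D* A C`. -/
theorem complementable_implies_weakly_complementable
    {H K G G' : Type*}
    [NormedAddCommGroup H] [InnerProductSpace ℂ H] [CompleteSpace H]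
    [NormedAddCommGroup K] [InnerProductSpace ℂ K] [CompleteSpace K]
    [NormedAddCommGroup G] [InnerProductSpace ℂ G] [CompleteSpace G]
    [NormedAddCommGroup G'] [InnerProductSpace ℂ G'] [CompleteSpace G']
    (A : H →L[ℂ] K)
    -- `V_A` is the (unique) operator with `|A*|^{1/2} V_A = A` and `R(V_A) ⊆ closure R(A)`
    (V_A : H →L[ℂ] K)
    (hV₁ : (absPow (ContinuousLinearMap.adjoint A) (1/2)).comp V_A = A)
    (hV₂ : Set.range V_A ⊆ closure (Set.range A))
    (hVuniq : ∀ W : H →L[ℂ] K,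
      (absPow (ContinuousLinearMap.adjoint A) (1/2)).comp W = A →
      Set.range W ⊆ closure (Set.range A) → W = V_A)
    (C : G →L[ℂ] H) (D : G' →L[ℂ] K)
    (T₂₁ : G →L[ℂ] K) (T₁₂s : G' →L[ℂ] H)
    (hT₂₁ : T₂₁ = A.comp C) (hT₁₂s : T₁₂s = (ContinuousLinearMap.adjoint A).comp D) :
    ∃ (E : G →L[ℂ] H) (F : G' →L[ℂ] H),
      IsReducedSolution V_A T₂₁ E ∧
      IsReducedSolution (absPow A (1/2)) T₁₂s F ∧
      (ContinuousLinearMap.adjoint F).comp E =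
        ((ContinuousLinearMap.adjoint D).comp A).comp C := by
  set Q := absPow A (1/2) with hQdef
  set P := absPow (ContinuousLinearMap.adjoint A) (1/2) with hPdef
  have key : A.comp Q = P.comp A := absPow_half_comm A
  have hQ0 : (0 : H →L[ℂ] H) ≤ Q := absPow_nonneg A _
  have hP0 : (0 : K →L[ℂ] K) ≤ P := absPow_nonneg _ _
  have hQsa : ContinuousLinearMap.adjoint Q = Q := by
    have := ((ContinuousLinearMap.nonneg_iff_isPositive Q).mp hQ0).isSelfAdjoint
    rwa [IsSelfAdjoint, ContinuousLinearMap.star_eq_adjoint] at this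
  have hQ4 : Q ^ (4:ℕ) = (ContinuousLinearMap.adjoint A).comp A := absPow_half_pow_four A
  have hP4 : P ^ (4:ℕ) = A.comp (ContinuousLinearMap.adjoint A) := by
    have := absPow_half_pow_four (ContinuousLinearMap.adjoint A)
    rwa [adjoint_adjoint] at this
  have hQ4' : ∀ x : H, Q (Q (Q (Q x))) = (ContinuousLinearMap.adjoint A) (A x) := by
    intro x
    have := congrArg (fun (f : H →L[ℂ] H) => f x) hQ4
    simpa [pow_succ, ContinuousLinearMap.mul_apply] using this
  have hP4' : ∀ y : K, P (P (P (P y))) = A ((ContinuousLinearMap.adjoint A) y) := by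
    intro y
    have := congrArg (fun (f : K →L[ℂ] K) => f y) hP4
    simpa [pow_succ, ContinuousLinearMap.mul_apply] using this
  have hQsym : ∀ a b : H, ⟪Q a, b⟫ = ⟪a, Q b⟫ := by
    intro a b
    conv_lhs => rw [← hQsa]
    exact ContinuousLinearMap.adjoint_inner_left Q b a
  have hPV : ∀ x : H, P (V_A x) = A x := by
    intro x
    simpa using congrArg (fun (f : H →L[ℂ] K) => f x) hV₁
  have hkeyV : ∀ x : H, A (Q x) = P (A x) := by
    intro x
    simpa using congrArg (fun (f : H →L[ℂ] K) => f x) key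
  -- kernel facts
  have hkerA_Q : ∀ x : H, A x = 0 → Q x = 0 := by
    intro x hx
    have h2 : Q (Q x) = 0 := by
      apply (inner_self_eq_zero (𝕜 := ℂ)).mp
      have h3 : ⟪Q (Q (Q (Q x))), x⟫ = ⟪Q (Q x), Q (Q x)⟫ := by
        rw [hQsym (Q (Q (Q x))) x, hQsym (Q (Q x)) (Q x)]
      rw [← h3, hQ4' x, hx, map_zero, inner_zero_left]
    apply (inner_self_eq_zero (𝕜 := ℂ)).mp
    have h5 : ⟪Q (Q x), x⟫ = ⟪Q x, Q x⟫ := hQsym (Q x) x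
    rw [← h5, h2, inner_zero_left]
  have hkerQ_A : ∀ x : H, Q x = 0 → A x = 0 := by
    intro x hx
    apply (inner_self_eq_zero (𝕜 := ℂ)).mp
    rw [← ContinuousLinearMap.adjoint_inner_left A x (A x), ← hQ4' x, hx, map_zero, map_zero,
      map_zero, inner_zero_left]
  have hkerP_As : ∀ y : K, P y = 0 → (ContinuousLinearMap.adjoint A) y = 0 := by
    intro y hy
    apply (inner_self_eq_zero (𝕜 := ℂ)).mp
    have h1 := ContinuousLinearMap.adjoint_inner_right A ((ContinuousLinearMap.adjoint A) y) y
    rw [← hP4' y, hy, map_zero, map_zero, map_zero, inner_zero_left] at h1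
    exact h1
  have injP : ∀ y : K, y ∈ closure (Set.range A) → P y = 0 → y = 0 := by
    intro y hy hPy
    have hAy : (ContinuousLinearMap.adjoint A) y = 0 := hkerP_As y hPy
    have horth : Set.range A ⊆ {z : K | ⟪y, z⟫ = (0:ℂ)} := by
      rintro _ ⟨h, rfl⟩
      show ⟪y, A h⟫ = (0:ℂ)
      rw [← ContinuousLinearMap.adjoint_inner_left, hAy, inner_zero_left]
    have hclosed : closure (Set.range A) ⊆ {z : K | ⟪y, z⟫ = (0:ℂ)} :=
      closure_minimal horth
        (isClosed_eq (Continuous.inner continuous_const continuous_id) continuous_const)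
    exact (inner_self_eq_zero (𝕜 := ℂ)).mp (hclosed hy)
  -- `V_A ∘ Q = A`
  have hVQ : V_A.comp Q = A := by
    ext x
    have h1 : P (V_A (Q x) - A x) = 0 := by
      rw [map_sub, hPV (Q x), hkeyV x, sub_self]
    have hmem : V_A (Q x) - A x ∈ closure (Set.range A) := by
      have hm1 : V_A (Q x) ∈ closure (Set.range A) := hV₂ ⟨Q x, rfl⟩
      have hm2 : A x ∈ closure (Set.range A) := subset_closure ⟨x, rfl⟩
      have e : Set.range A = ((LinearMap.range (A : H →ₗ[ℂ] K)) : Set K) := (LinearMap.coe_range _).symm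
      rw [e, ← Submodule.topologicalClosure_coe] at hm1 hm2 ⊢
      exact Submodule.sub_mem _ hm1 hm2
    have h2 := injP _ hmem h1
    rw [sub_eq_zero] at h2
    simpa using h2
  -- range conditions
  have hrangeE : Set.range (Q.comp C) ⊆ closure (Set.range (ContinuousLinearMap.adjoint V_A)) := by
    rintro _ ⟨g, rfl⟩
    set U : Submodule ℂ H := LinearMap.range ((ContinuousLinearMap.adjoint V_A : K →L[ℂ] H) : K →ₗ[ℂ] H) with hUdef
    have hcl : closure (Set.range (ContinuousLinearMap.adjoint V_A)) = (Uᗮᗮ : Set H) := by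
      rw [Submodule.orthogonal_orthogonal_eq_closure, Submodule.topologicalClosure_coe, hUdef,
        LinearMap.coe_range, ContinuousLinearMap.coe_coe]
    rw [ContinuousLinearMap.comp_apply, hcl, SetLike.mem_coe, Submodule.mem_orthogonal]
    intro v hv
    have hVv : V_A v = 0 := by
      apply (inner_self_eq_zero (𝕜 := ℂ)).mp
      have h0 := (Submodule.mem_orthogonal U v).mp hv
        ((ContinuousLinearMap.adjoint V_A) (V_A v)) (LinearMap.mem_range.mpr ⟨V_A v, rfl⟩)
      rwa [ContinuousLinearMap.adjoint_inner_left] at h0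
    have hAv : A v = 0 := by
      have := hPV v
      rw [hVv, map_zero] at this
      exact this.symm
    have hQv : Q v = 0 := hkerA_Q v hAv
    rw [← hQsym, hQv, inner_zero_left]
  have hrangeF : Set.range ((ContinuousLinearMap.adjoint V_A).comp D)
      ⊆ closure (Set.range (ContinuousLinearMap.adjoint Q)) := by
    rw [hQsa]
    rintro _ ⟨g, rfl⟩
    set W : Submodule ℂ H := LinearMap.range (Q : H →ₗ[ℂ] H) with hWdef
    have hcl : closure (Set.range Q) = (Wᗮᗮ : Set H) := by
      rw [Submodule.orthogonal_orthogonal_eq_closure, Submodule.topologicalClosure_coe, hWdef,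
        LinearMap.coe_range, ContinuousLinearMap.coe_coe]
    rw [ContinuousLinearMap.comp_apply, hcl, SetLike.mem_coe, Submodule.mem_orthogonal]
    intro v hv
    have hQv : Q v = 0 := by
      apply (inner_self_eq_zero (𝕜 := ℂ)).mp
      have h0 := (Submodule.mem_orthogonal W v).mp hv (Q (Q v))
        (LinearMap.mem_range.mpr ⟨Q v, rfl⟩)
      rwa [hQsym] at h0
    have hAv : A v = 0 := hkerQ_A v hQv
    have hVv : V_A v = 0 := by
      apply injP _ (hV₂ ⟨v, rfl⟩)
      rw [hPV v, hAv]
    rw [ContinuousLinearMap.adjoint_inner_right, hVv, inner_zero_left]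
  refine ⟨Q.comp C, (ContinuousLinearMap.adjoint V_A).comp D, ⟨?_, hrangeE⟩, ⟨?_, hrangeF⟩, ?_⟩
  · rw [hT₂₁, ← ContinuousLinearMap.comp_assoc, hVQ]
  · have hQV : Q.comp (ContinuousLinearMap.adjoint V_A) = ContinuousLinearMap.adjoint A := by
      rw [← hVQ, ContinuousLinearMap.adjoint_comp, hQsa]
    rw [hT₁₂s, ← ContinuousLinearMap.comp_assoc, hQV]
  · rw [ContinuousLinearMap.adjoint_comp, adjoint_adjoint, ← hVQ]
    ext x
    simp [ContinuousLinearMap.comp_apply]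

end Main
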